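/- Let A be a product of rings of integers of finite extensions of ℚ₂. For α, β ∈ A, the element (1+4α)(1+4β)·(1+4(α+β))^{-1} is a square in A^×. In particular, the map 1+4β ↦ β̄ induces a group homomorphism from {u ∈ A^× : u ≡ 1 mod 4A}/(A^×)² to the reduction of A modulo its radical. -/

import Mathlib

open IsLocalRing Polynomial

set_option linter.unusedSectionVars false

section AuxComplete

variable {O : Type} [CommRing O] [Algebra ℤ_[2] O]
  [Module.Finite ℤ_[2] O] [Module.Free ℤ_[2] O] [NoZeroSMulDivisors ℤ_[2] O]

local notation "ι" => Module.Free.ChooseBasisIndex ℤ_[2] O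

noncomputable def auxE : O ≃ₗ[ℤ_[2]] (ι → ℤ_[2]) :=
  (Module.Free.chooseBasis ℤ_[2] O).equivFun

lemma aux_pow_smul_eq (n : ℕ) (y : O) : (2 : ℤ_[2]) ^ n • y = (2 : O) ^ n * y := by
  rw [Algebra.smul_def, map_pow, map_ofNat]

lemma aux_mem_pow_iff (x : O) (n : ℕ) :
    x ∈ (Ideal.span {(2 : O)}) ^ n ↔ ∀ j, (2 : ℤ_[2]) ^ n ∣ auxE x j := by
  rw [Ideal.span_singleton_pow, Ideal.mem_span_singleton]
  constructor
  · rintro ⟨y, rfl⟩ j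
    rw [← aux_pow_smul_eq, map_smul]
    exact ⟨auxE y j, rfl⟩
  · intro h
    choose c hc using h
    refine ⟨auxE.symm c, ?_⟩
    apply auxE.injective
    rw [← aux_pow_smul_eq, map_smul, LinearEquiv.apply_symm_apply]
    funext j
    exact hc j

lemma aux_z2_mem_pow_iff (x : ℤ_[2]) (n : ℕ) :
    x ∈ (maximalIdeal ℤ_[2]) ^ n ↔ (2 : ℤ_[2]) ^ n ∣ x := by
  rw [PadicInt.maximalIdeal_eq_span_p, Ideal.span_singleton_pow, Ideal.mem_span_singleton]
  norm_num

lemma aux_adic_complete : IsAdicComplete (Ideal.span {(2 : O)}) O := by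
  refine { toIsHausdorff := ?_, toIsPrecomplete := ?_ }
  · constructor
    intro x hx
    apply auxE.injective
    rw [map_zero]
    funext j
    refine IsHausdorff.haus (inferInstance : IsHausdorff (maximalIdeal ℤ_[2]) ℤ_[2]) (auxE x j) ?_
    intro n
    rw [SModEq.zero, ← Ideal.one_eq_top, Ideal.smul_eq_mul, mul_one, aux_z2_mem_pow_iff]
    have := hx n
    rw [SModEq.zero, ← Ideal.one_eq_top, Ideal.smul_eq_mul, mul_one, aux_mem_pow_iff] at this
    exact this j
  · constructor
    intro f hf
    have key : ∀ j, ∃ L, ∀ n, (fun n => auxE (f n) j) n ≡ L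
        [SMOD (maximalIdeal ℤ_[2]) ^ n • (⊤ : Submodule ℤ_[2] ℤ_[2])] := by
      intro j
      refine IsPrecomplete.prec (inferInstance : IsPrecomplete (maximalIdeal ℤ_[2]) ℤ_[2]) ?_
      intro m n hmn
      have := hf hmn
      rw [SModEq.sub_mem, ← Ideal.one_eq_top, Ideal.smul_eq_mul, mul_one, aux_mem_pow_iff] at this
      rw [SModEq.sub_mem, ← Ideal.one_eq_top, Ideal.smul_eq_mul, mul_one, aux_z2_mem_pow_iff]
      simpa using this j
    choose L hL using key
    refine ⟨auxE.symm L, ?_⟩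
    intro n
    rw [SModEq.sub_mem, ← Ideal.one_eq_top, Ideal.smul_eq_mul, mul_one, aux_mem_pow_iff]
    intro j
    have := hL j n
    rw [SModEq.sub_mem, ← Ideal.one_eq_top, Ideal.smul_eq_mul, mul_one, aux_z2_mem_pow_iff] at this
    simpa [map_sub] using this

end AuxComplete

/-- In a ring integral over `ℤ₂`, any element of the form `1 + 2x` is a unit, since `2`
lies in every maximal ideal. -/
lemma aux_unit {O : Type} [CommRing O] [Algebra ℤ_[2] O] [Algebra.IsIntegral ℤ_[2] O]
    (x : O) : IsUnit (1 + 2 * x) := by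
  by_contra h
  obtain ⟨M, hM, hmem⟩ := exists_max_ideal_of_mem_nonunits h
  have h2 : (2 : O) ∈ M := by
    have hc : (M.comap (algebraMap ℤ_[2] O)).IsMaximal :=
      Ideal.isMaximal_comap_of_isIntegral_of_isMaximal M
    have : (2 : ℤ_[2]) ∈ M.comap (algebraMap ℤ_[2] O) := by
      rw [eq_maximalIdeal hc, PadicInt.maximalIdeal_eq_span_p, Ideal.mem_span_singleton]
      norm_num
    simpa [map_ofNat] using this
  have h1 : (1 : O) ∈ M := by
    have := M.sub_mem hmem (M.mul_mem_right x h2)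
    simpa using this
  exact hM.ne_top (M.eq_top_of_isUnit_mem h1 isUnit_one)

set_option maxHeartbeats 1000000 in
/-- Hensel's lemma applied to `X² + (1+4s)X - 4p(1+4s)` over a `2`-adically complete
domain, yielding the key quadratic identity. -/
lemma aux_root' {O : Type} [CommRing O] [IsDomain O] [CharZero O] [Algebra ℤ_[2] O]
    [IsAdicComplete (Ideal.span {(2 : O)}) O]
    (s p : O) :
    ∃ t : O, 2 * t ^ 2 + (1 + 4 * s) * t = 2 * p * (1 + 4 * s) := by
  haveI hH : HenselianRing O (Ideal.span {(2 : O)}) := inferInstance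
  set f : O[X] := X ^ 2 + (C (1 + 4 * s) * X + C (-(4 * p * (1 + 4 * s)))) with hf
  have hmonic : f.Monic := by
    apply monic_X_pow_add
    apply lt_of_le_of_lt (degree_linear_le)
    norm_num
  have heval : f.eval 0 ∈ Ideal.span {(2 : O)} := by
    rw [Ideal.mem_span_singleton]
    refine ⟨-(2 * p * (1 + 4 * s)), ?_⟩
    simp [hf]
    ring
  have hderiv : IsUnit (Ideal.Quotient.mk (Ideal.span {(2 : O)}) (f.derivative.eval 0)) := by
    have hd : f.derivative.eval 0 = 1 + 4 * s := by
      simp [hf, derivative_X_pow]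
    rw [hd, map_add, map_one]
    have : Ideal.Quotient.mk (Ideal.span {(2 : O)}) (4 * s) = 0 := by
      rw [Ideal.Quotient.eq_zero_iff_mem, Ideal.mem_span_singleton]
      exact ⟨2 * s, by ring⟩
    rw [this, add_zero]
    exact isUnit_one
  obtain ⟨a, ha, hmem⟩ := hH.is_henselian f hmonic 0 heval hderiv
  rw [sub_zero, Ideal.mem_span_singleton] at hmem
  obtain ⟨t, rfl⟩ := hmem
  refine ⟨t, ?_⟩
  have hroot : (2 * t) ^ 2 + ((1 + 4 * s) * (2 * t) + (-(4 * p * (1 + 4 * s)))) = 0 := by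
    have := ha
    simpa [hf, IsRoot] using this
  have h2 : (2 : O) * (2 * t ^ 2 + (1 + 4 * s) * t) = 2 * (2 * p * (1 + 4 * s)) := by
    linear_combination hroot
  exact mul_left_cancel₀ (two_ne_zero) h2

/-- The quadratic identity holds in the ring of integers of a finite extension of `ℚ₂`. -/
lemma aux_root {K : Type} [Field K] [Algebra ℚ_[2] K] [FiniteDimensional ℚ_[2] K]
    [Algebra ℤ_[2] K] [IsScalarTower ℤ_[2] ℚ_[2] K] (s p : integralClosure ℤ_[2] K) :
    ∃ t : integralClosure ℤ_[2] K,
      2 * t ^ 2 + (1 + 4 * s) * t = 2 * p * (1 + 4 * s) := by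
  have hCZ : CharZero K := charZero_of_injective_algebraMap (algebraMap ℚ_[2] K).injective
  have hNZ : NoZeroSMulDivisors ℤ_[2] K := by
    refine (noZeroSMulDivisors_iff_right_eq_zero_of_smul).mpr fun r hr m hm => ?_
    have hinj : Function.Injective (algebraMap ℤ_[2] K) := by
      rw [IsScalarTower.algebraMap_eq ℤ_[2] ℚ_[2] K]
      exact (algebraMap ℚ_[2] K).injective.comp (IsFractionRing.injective ℤ_[2] ℚ_[2])
    rw [Algebra.smul_def] at hm
    exact (mul_eq_zero.mp hm).resolve_left ((map_ne_zero_iff _ hinj).mpr hr)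
  haveI : Module.Free ℤ_[2] (integralClosure ℤ_[2] K) :=
    IsIntegralClosure.module_free ℤ_[2] ℚ_[2] K (integralClosure ℤ_[2] K)
  haveI : Module.Finite ℤ_[2] (integralClosure ℤ_[2] K) :=
    IsIntegralClosure.finite ℤ_[2] ℚ_[2] K (integralClosure ℤ_[2] K)
  haveI : NoZeroSMulDivisors ℤ_[2] (integralClosure ℤ_[2] K) :=
    Function.Injective.noZeroSMulDivisors _ Subtype.val_injective rfl (fun _ _ => rfl)
  haveI : IsAdicComplete (Ideal.span {(2 : integralClosure ℤ_[2] K)})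
      (integralClosure ℤ_[2] K) := aux_adic_complete
  exact aux_root' s p

/-- A pointwise unit in a product of monoids is a unit. -/
lemma aux_pi_isUnit {ι : Type*} {M : ι → Type*} [∀ i, Monoid (M i)] {f : ∀ i, M i}
    (h : ∀ i, IsUnit (f i)) : IsUnit f := by
  choose u hu using h
  refine ⟨⟨f, fun i => ((u i)⁻¹ : (M i)ˣ), ?_, ?_⟩, rfl⟩
  · funext i
    show f i * ((u i)⁻¹ : (M i)ˣ) = 1
    rw [← hu i, Units.mul_inv]
  · funext i
    show ((u i)⁻¹ : (M i)ˣ) * f i = 1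
    rw [← hu i, Units.inv_mul]

/-- Let `A = 𝒪₁ × ⋯ × 𝒪_r` be a product of rings of integers of finite extensions of
`ℚ₂`. For `α, β ∈ A`, the element `(1+4α)(1+4β)(1+4(α+β))⁻¹` is a square in `A^×`:
there is a unit `u` with `(1+4α)(1+4β) = (1+4(α+β))·u²`. In particular `1+4β ↦ β̄`
induces a homomorphism `{u ≡ 1 mod 4}/(A^×)² → A/rad(A)`. -/
theorem stmt4 (r : ℕ) (K : Fin r → Type) [∀ i, Field (K i)]
    [∀ i, Algebra ℚ_[2] (K i)] [∀ i, FiniteDimensional ℚ_[2] (K i)]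
    [∀ i, Algebra ℤ_[2] (K i)] [∀ i, IsScalarTower ℤ_[2] ℚ_[2] (K i)]
    (α β : ∀ i, integralClosure ℤ_[2] (K i)) :
    ∃ u : (∀ i, integralClosure ℤ_[2] (K i))ˣ,
      (1 + 4 * α) * (1 + 4 * β) =
        (1 + 4 * (α + β)) * (u : ∀ i, integralClosure ℤ_[2] (K i)) ^ 2 := by
  have hroot := fun i => aux_root (α i + β i) (α i * β i)
  choose t ht using hroot
  have hV : IsUnit (1 + 4 * (α + β)) := by
    apply aux_pi_isUnit
    intro i
    have := aux_unit (2 * (α i + β i) : integralClosure ℤ_[2] (K i))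
    convert this using 1
    simp
    ring
  have hU : IsUnit (1 + 4 * (α + β) + 4 * t) := by
    apply aux_pi_isUnit
    intro i
    have := aux_unit (2 * (α i + β i) + 2 * t i : integralClosure ℤ_[2] (K i))
    convert this using 1
    simp
    ring
  obtain ⟨U, hUs⟩ := hU
  obtain ⟨V, hVs⟩ := hV
  refine ⟨U * V⁻¹, ?_⟩
  refine ((V.isUnit).pow 2).mul_right_cancel ?_
  have hkey : (1 + 4 * α) * (1 + 4 * β) * (1 + 4 * (α + β)) ^ 2 =
      (1 + 4 * (α + β)) * (1 + 4 * (α + β) + 4 * t) ^ 2 := by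
    funext i
    have h := ht i
    simp only [Pi.mul_apply, Pi.add_apply, Pi.pow_apply, Pi.one_apply, Pi.ofNat_apply]
    linear_combination (-8 : integralClosure ℤ_[2] (K i)) * (1 + 4 * (α i + β i)) * h
  have hg : (U * V⁻¹) ^ 2 * V ^ 2 = U ^ 2 := by
    rw [mul_pow, mul_assoc, inv_pow, inv_mul_cancel, mul_one]
  have hval : ((U * V⁻¹ : (∀ i, integralClosure ℤ_[2] (K i))ˣ) :
        (∀ i, integralClosure ℤ_[2] (K i))) ^ 2 * (V : ∀ i, integralClosure ℤ_[2] (K i)) ^ 2 =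
      (U : ∀ i, integralClosure ℤ_[2] (K i)) ^ 2 := by
    rw [← Units.val_pow_eq_pow_val, ← Units.val_pow_eq_pow_val, ← Units.val_mul, hg,
      Units.val_pow_eq_pow_val]
  rw [mul_assoc (1 + 4 * (α + β)), hval, hUs, ← hkey, hVs]
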